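/- Among all 7-element subsets of ZMod 12, the maximum possible number of alternate chords (3-element subsets with all pairwise differences in {3, 4, 5, 6, 7, 8, 9} ⊆ ZMod 12) is exactly 10. -/

import Mathlib

/-- The set of alternate harmonic intervals in ZMod 12 (including the tritone). -/
def altHarmonicSet : Finset (ZMod 12) := {3, 4, 5, 6, 7, 8, 9}

/-- The number of 3-element subsets of S that are alternate chords, i.e. whose
elements are pairwise at alternate harmonic intervals. -/
def altChordCount (S : Finset (ZMod 12)) : ℕ :=
  ((S.powersetCard 3).filter (fun c => ∀ x ∈ c, ∀ y ∈ c, x ≠ y → x - y ∈ altHarmonicSet)).card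

def chordsN : List (ℕ × ℕ × ℕ) :=
  [(0,3,6),(0,3,7),(0,3,8),(0,3,9),(0,4,7),(0,4,8),(0,4,9),(0,5,8),(0,5,9),(0,6,9),
   (1,4,7),(1,4,8),(1,4,9),(1,4,10),(1,5,8),(1,5,9),(1,5,10),(1,6,9),(1,6,10),(1,7,10),
   (2,5,8),(2,5,9),(2,5,10),(2,5,11),(2,6,9),(2,6,10),(2,6,11),(2,7,10),(2,7,11),(2,8,11),
   (3,6,9),(3,6,10),(3,6,11),(3,7,10),(3,7,11),(3,8,11),(4,7,10),(4,7,11),(4,8,11),(5,8,11)]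

def memN (x a b c d e f g : ℕ) : Prop := x = a ∨ x = b ∨ x = c ∨ x = d ∨ x = e ∨ x = f ∨ x = g
instance : ∀ x a b c d e f g : ℕ, Decidable (memN x a b c d e f g) := fun _ _ _ _ _ _ _ _ => by
  unfold memN; infer_instance

def countN (a b c d e f g : ℕ) : ℕ :=
  chordsN.countP (fun t => decide (memN t.1 a b c d e f g ∧ memN t.2.1 a b c d e f g ∧ memN t.2.2 a b c d e f g))

def chordsL : List (Finset (ZMod 12)) :=
  chordsN.map (fun t => ({(t.1 : ZMod 12), (t.2.1 : ZMod 12), (t.2.2 : ZMod 12)} : Finset (ZMod 12)))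

lemma chordsL_nodup : chordsL.Nodup := by decide

set_option maxRecDepth 10000 in
lemma chords_spec : chordsL.toFinset = (Finset.univ.powersetCard 3).filter
    (fun c => ∀ x ∈ c, ∀ y ∈ c, x ≠ y → x - y ∈ altHarmonicSet) := by decide

lemma count_eq (S : Finset (ZMod 12)) :
    altChordCount S = (chordsL.filter (fun c => c ⊆ S)).length := by
  unfold altChordCount
  have h1 : (S.powersetCard 3).filter (fun c => ∀ x ∈ c, ∀ y ∈ c, x ≠ y → x - y ∈ altHarmonicSet)
      = chordsL.toFinset.filter (fun c => c ⊆ S) := by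
    rw [chords_spec]
    ext c
    simp only [Finset.mem_filter, Finset.mem_powersetCard, Finset.mem_univ, Finset.subset_univ,
      true_and]
    tauto
  have h2 : chordsL.toFinset.filter (fun c => c ⊆ S) = (chordsL.filter (fun c => decide (c ⊆ S))).toFinset := by
    ext c; simp [List.mem_filter]
  rw [h1, h2, List.toFinset_card_of_nodup (chordsL_nodup.filter _)]

lemma castEq {x y : ℕ} (hx : x < 12) (hy : y < 12) :
    ((x : ZMod 12) = (y : ZMod 12)) ↔ x = y := by
  rw [ZMod.natCast_eq_natCast_iff, Nat.ModEq, Nat.mod_eq_of_lt hx, Nat.mod_eq_of_lt hy]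

lemma memIff {x a b c d e f g : ℕ} (hx : x < 12) (ha : a < 12) (hb : b < 12) (hc : c < 12)
    (hd : d < 12) (he : e < 12) (hf : f < 12) (hg : g < 12) :
    ((x : ZMod 12) ∈ ({(a:ZMod 12),(b:ZMod 12),(c:ZMod 12),(d:ZMod 12),(e:ZMod 12),(f:ZMod 12),(g:ZMod 12)} : Finset (ZMod 12)))
      ↔ memN x a b c d e f g := by
  simp only [Finset.mem_insert, Finset.mem_singleton, memN,
    castEq hx ha, castEq hx hb, castEq hx hc, castEq hx hd, castEq hx he, castEq hx hf, castEq hx hg]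

lemma zmodLitEq (x : ZMod 12) {y : ℕ} (hy : y < 12) : (x = (y : ZMod 12)) ↔ x.val = y := by
  constructor
  · rintro rfl; exact ZMod.val_cast_of_lt hy
  · rintro rfl; exact (ZMod.natCast_rightInverse x).symm

lemma v0 : (0:ZMod 12).val = 0 := rfl
lemma v1 : (1:ZMod 12).val = 1 := rfl
lemma v2 : (2:ZMod 12).val = 2 := rfl
lemma v3 : (3:ZMod 12).val = 3 := rfl
lemma v4 : (4:ZMod 12).val = 4 := rfl
lemma v5 : (5:ZMod 12).val = 5 := rfl
lemma v6 : (6:ZMod 12).val = 6 := rfl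
lemma v7 : (7:ZMod 12).val = 7 := rfl
lemma v8 : (8:ZMod 12).val = 8 := rfl
lemma v9 : (9:ZMod 12).val = 9 := rfl
lemma v10 : (10:ZMod 12).val = 10 := rfl
lemma v11 : (11:ZMod 12).val = 11 := rfl

set_option maxHeartbeats 1000000 in
lemma bridge {a b c d e f g : ℕ} (ha : a < 12) (hb : b < 12) (hc : c < 12)
    (hd : d < 12) (he : e < 12) (hf : f < 12) (hg : g < 12) :
    (chordsL.filter (fun ch => ch ⊆ ({(a:ZMod 12),(b:ZMod 12),(c:ZMod 12),(d:ZMod 12),(e:ZMod 12),(f:ZMod 12),(g:ZMod 12)} : Finset (ZMod 12)))).length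
      = countN a b c d e f g := by
  unfold chordsL countN
  rw [List.countP_eq_length_filter, List.filter_map, List.length_map]
  congr 1
  apply List.filter_congr
  intro t ht
  fin_cases ht <;>
    · simp only [Function.comp_apply, decide_eq_decide]
      simp only [Finset.insert_subset_iff, Finset.singleton_subset_iff, Finset.mem_insert,
        Finset.mem_singleton, Nat.cast_ofNat, Nat.cast_zero, Nat.cast_one,
        zmodLitEq, ha, hb, hc, hd, he, hf, hg, memN, ZMod.val_zero, ZMod.val_one,
        v0, v1, v2, v3, v4, v5, v6, v7, v8, v9, v10, v11]


set_option maxRecDepth 40000 in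
set_option maxHeartbeats 4000000 in
set_option synthInstance.maxHeartbeats 1000000 in
set_option synthInstance.maxSize 2000 in
lemma keyN : ∀ g < 12, ∀ f < g, ∀ e < f, ∀ d < e, ∀ c < d, ∀ b < c, ∀ a < b,
    countN a b c d e f g ≤ 10 := by decide

/-- Among all 7-element subsets of ZMod 12, the maximum possible number
of alternate chords is exactly 10. -/
theorem stmt_18 :
    IsGreatest {n : ℕ | ∃ S : Finset (ZMod 12), S.card = 7 ∧ altChordCount S = n} 10 := by
  constructor
  · exact ⟨{0,1,2,4,5,8,9}, by decide, by decide⟩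
  · rintro n ⟨S, hS7, rfl⟩
    have hT : (S.image ZMod.val).card = 7 := by
      rw [Finset.card_image_of_injective _ (ZMod.val_injective 12), hS7]
    have hlen : ((S.image ZMod.val).sort (· ≤ ·)).length = 7 := by
      rw [Finset.length_sort, hT]
    have hsort : ((S.image ZMod.val).sort (· ≤ ·)).Pairwise (· < ·) :=
      (Finset.sortedLT_sort _).pairwise
    have hTl : ((S.image ZMod.val).sort (· ≤ ·)).toFinset = S.image ZMod.val :=
      Finset.sort_toFinset _ _
    obtain ⟨a,b,c,d,e,f,g,hl⟩ : ∃ a b c d e f g,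
        (S.image ZMod.val).sort (· ≤ ·) = [a,b,c,d,e,f,g] := by
      rcases hll : (S.image ZMod.val).sort (· ≤ ·) with _|⟨a,_|⟨b,_|⟨c,_|⟨d,_|⟨e,_|⟨f,_|⟨g,_|⟨x,r⟩⟩⟩⟩⟩⟩⟩⟩ <;>
        simp_all
    rw [hl] at hsort hTl
    have hlt : ∀ x ∈ S.image ZMod.val, x < 12 := by
      intro x hx
      simp only [Finset.mem_image] at hx
      obtain ⟨y, -, rfl⟩ := hx
      exact ZMod.val_lt y
    simp only [List.pairwise_cons, List.mem_cons, List.not_mem_nil, or_false,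
      List.mem_singleton, forall_eq_or_imp, forall_eq, List.Pairwise.nil,
      List.pairwise_singleton, and_true] at hsort
    have hS : S = ({(a:ZMod 12),(b:ZMod 12),(c:ZMod 12),(d:ZMod 12),(e:ZMod 12),(f:ZMod 12),(g:ZMod 12)} : Finset (ZMod 12)) := by
      have h1 : (S.image ZMod.val).image (Nat.cast : ℕ → ZMod 12) = S := by
        rw [Finset.image_image]
        calc S.image ((Nat.cast : ℕ → ZMod 12) ∘ ZMod.val)
            = S.image id := Finset.image_congr (fun x _ => ZMod.natCast_rightInverse x)
          _ = S := Finset.image_id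
      rw [← h1, ← hTl]
      simp [Finset.image_insert]
    have ha : a < 12 := hlt a (by rw [← hTl]; simp)
    have hb : b < 12 := hlt b (by rw [← hTl]; simp)
    have hc : c < 12 := hlt c (by rw [← hTl]; simp)
    have hd : d < 12 := hlt d (by rw [← hTl]; simp)
    have he : e < 12 := hlt e (by rw [← hTl]; simp)
    have hf : f < 12 := hlt f (by rw [← hTl]; simp)
    have hg : g < 12 := hlt g (by rw [← hTl]; simp)
    rw [count_eq, hS, bridge ha hb hc hd he hf hg]
    exact keyN g hg f hsort.2.2.2.2.2.1 e hsort.2.2.2.2.1.1 d hsort.2.2.2.1.1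
      c hsort.2.2.1.1 b hsort.2.1.1 a hsort.1.1
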